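/- arXiv:2005.05400 — 6 statements merged into one kernel-verified Lean document; each statement's English description precedes it below -/
import Mathlib

section
/- Let c > s > 0, let x : ℝ → ℝ be uniformly Lipschitz continuous with Lipschitz constant s, fix t ∈ ℝ, and let τ ≥ 0 satisfy c·τ = |x(t) + x(t - τ)|. Writing x̃ = x(t-τ): if x(t) ≥ 0 then x(t) + x̃ ≥ 0, and if x(t) ≤ 0 then x(t) + x̃ ≤ 0. In particular sign(x(t) + x̃) = sign(x(t)) whenever x(t) ≠ 0. -/
/-- Sign preservation in the symmetric two-agent delayed model: with
c·τ = |x(t) + x(t-τ)|, x uniformly s-Lipschitz, s < c, the quantity x(t) + x(t-τ)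
has the same sign as x(t). -/
theorem stmt_6 (c s t : ℝ) (hs : 0 < s) (hsc : s < c)
    (x : ℝ → ℝ)
    (hlip : ∀ a b : ℝ, |x a - x b| ≤ s * |a - b|)
    (τ : ℝ) (hτ0 : 0 ≤ τ) (hτ : c * τ = |x t + x (t - τ)|) :
    (0 ≤ x t → 0 ≤ x t + x (t - τ)) ∧
      (x t ≤ 0 → x t + x (t - τ) ≤ 0) ∧
      (x t ≠ 0 → Real.sign (x t + x (t - τ)) = Real.sign (x t)) := by
  have hL := hlip (t - τ) t
  have habs : |t - τ - t| = τ := by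
    rw [show t - τ - t = -τ by ring, abs_neg, abs_of_nonneg hτ0]
  rw [habs] at hL
  have hL1 : x t - s * τ ≤ x (t - τ) := by
    have := (abs_le.mp hL).1; linarith
  have hL2 : x (t - τ) ≤ x t + s * τ := by
    have := (abs_le.mp hL).2; linarith
  have h1 : 0 ≤ x t → 0 ≤ x t + x (t - τ) := by
    intro hx
    by_contra h
    push_neg at h
    rw [abs_of_neg h] at hτ
    nlinarith
  have h2 : x t ≤ 0 → x t + x (t - τ) ≤ 0 := by
    intro hx
    by_contra h
    push_neg at h
    rw [abs_of_pos h] at hτ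
    nlinarith
  refine ⟨h1, h2, ?_⟩
  intro hne
  have hτ0' : τ = 0 → x (t - τ) = x t := by
    intro h; rw [h]; norm_num
  rcases lt_or_gt_of_ne hne with hneg | hpos
  · have hsum : x t + x (t - τ) ≤ 0 := h2 hneg.le
    have hsum' : x t + x (t - τ) < 0 := by
      rcases hsum.lt_or_eq with h | h
      · exact h
      · exfalso
        have hτz : τ = 0 := by
          rw [h, abs_zero] at hτ
          nlinarith
        have := hτ0' hτz
        rw [this] at h
        linarith
    rw [Real.sign_of_neg hsum', Real.sign_of_neg hneg]
  · have hsum : 0 ≤ x t + x (t - τ) := h1 hpos.le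
    have hsum' : 0 < x t + x (t - τ) := by
      rcases hsum.lt_or_eq with h | h
      · exact h
      · exfalso
        have hτz : τ = 0 := by
          rw [← h, abs_zero] at hτ
          nlinarith
        have := hτ0' hτz
        rw [this] at h
        linarith
    rw [Real.sign_of_pos hsum', Real.sign_of_pos hpos]
end

section
/- Let c > s > 0, let ψ : [0,∞) → [0,∞) satisfy sup_{r>0} ψ(r)·r ≤ s, and let x : [-S⁰, T] → ℝ be a differentiable solution on (0,T) of ẋ(t) = -ψ(|x(t) + x(t-τ(t))|)·(x(t) + x(t-τ(t))), where for each t the delay τ(t) ≥ 0 solves c·τ(t) = |x(t) + x(t-τ(t))|, and x is uniformly Lipschitz with constant s on [-S⁰, T]. Then the function t ↦ x(t)² is non-increasing on [0,T]; in particular |x(t)| ≤ |x(0)| for all t ∈ [0,T]. -/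
/-- For the symmetric two-agent Hegselmann-Krause model with state-dependent delay,
ẋ = -ψ(|x + x̃|)(x + x̃) with c·τ(t) = |x(t) + x(t-τ(t))|, sup ψ(r)r ≤ s < c and
x uniformly s-Lipschitz on [-S⁰,T], the squared modulus t ↦ x(t)² is non-increasing
on [0,T]; in particular |x(t)| ≤ |x(0)|. -/
theorem stmt_7 (c s S0 T : ℝ) (hs : 0 < s) (hsc : s < c) (hS0 : 0 ≤ S0) (hT : 0 < T)
    (ψ : ℝ → ℝ) (hψnn : ∀ r : ℝ, 0 ≤ r → 0 ≤ ψ r)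
    (hψs : ∀ r : ℝ, 0 < r → ψ r * r ≤ s)
    (x : ℝ → ℝ) (τ : ℝ → ℝ)
    (hτ0 : ∀ t ∈ Set.Icc (0 : ℝ) T, 0 ≤ τ t)
    (hdom : ∀ t ∈ Set.Icc (0 : ℝ) T, -S0 ≤ t - τ t)
    (hτ : ∀ t ∈ Set.Icc (0 : ℝ) T, c * τ t = |x t + x (t - τ t)|)
    (hode : ∀ t ∈ Set.Ioo (0 : ℝ) T,
      HasDerivAt x (-(ψ (|x t + x (t - τ t)|) * (x t + x (t - τ t)))) t)
    (hlip : ∀ a b, a ∈ Set.Icc (-S0) T → b ∈ Set.Icc (-S0) T →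
      |x a - x b| ≤ s * |a - b|) :
    AntitoneOn (fun t => x t ^ 2) (Set.Icc 0 T) ∧
      ∀ t ∈ Set.Icc (0 : ℝ) T, |x t| ≤ |x 0| := by
  have hc : 0 < c := hs.trans hsc
  -- sign lemma: y * x t ≥ 0
  have hsign : ∀ t ∈ Set.Icc (0 : ℝ) T, 0 ≤ (x t + x (t - τ t)) * x t := by
    intro t ht
    set y := x t + x (t - τ t) with hy
    rcases eq_or_ne y 0 with h0 | h0
    · simp [h0]
    · have hτt := hτ t ht
      have hyabs : 0 < |y| := abs_pos.mpr h0
      rw [← hy] at hτt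
      have hτpos : 0 < τ t := by nlinarith
      have htmem : t - τ t ∈ Set.Icc (-S0) T :=
        ⟨hdom t ht, by linarith [hτ0 t ht, ht.2]⟩
      have htmem2 : t ∈ Set.Icc (-S0) T := ⟨by linarith [ht.1], ht.2⟩
      have hd := hlip (t - τ t) t htmem htmem2
      have : |x (t - τ t) - x t| ≤ s * τ t := by
        have : |t - τ t - t| = τ t := by
          rw [show t - τ t - t = -(τ t) by ring, abs_neg, abs_of_nonneg (hτ0 t ht)]
        rw [this] at hd; exact hd
      have hlt : |x (t - τ t) - x t| < |y| := by
        have : s * τ t < c * τ t := by nlinarith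
        calc |x (t - τ t) - x t| ≤ s * τ t := ‹_›
          _ < c * τ t := this
          _ = |y| := hτt
      rcases abs_cases y with ⟨hy1, _⟩ | ⟨hy1, _⟩ <;>
        rcases abs_cases (x (t - τ t) - x t) with ⟨hd1, _⟩ | ⟨hd1, _⟩ <;>
        nlinarith
  have hanti : AntitoneOn (fun t => x t ^ 2) (Set.Icc 0 T) := by
    have hcont : ContinuousOn x (Set.Icc (-S0) T) := by
      apply LipschitzOnWith.continuousOn (K := ⟨s, hs.le⟩)
      apply LipschitzOnWith.of_dist_le_mul
      intro a ha b hb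
      rw [Real.dist_eq, Real.dist_eq]
      exact hlip a b ha hb
    have hcont2 : ContinuousOn (fun t => x t ^ 2) (Set.Icc 0 T) :=
      ((hcont.mono (Set.Icc_subset_Icc (by linarith) le_rfl)).pow 2)
    have hderiv : ∀ t ∈ Set.Ioo (0 : ℝ) T,
        HasDerivAt (fun t => x t ^ 2)
          (2 * x t * (-(ψ (|x t + x (t - τ t)|) * (x t + x (t - τ t))))) t := by
      intro t ht
      simpa [mul_comm] using ((hode t ht).fun_pow 2)
    apply antitoneOn_of_deriv_nonpos (convex_Icc 0 T) hcont2
    · intro t ht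
      rw [interior_Icc] at ht
      exact (hderiv t ht).differentiableAt.differentiableWithinAt
    · intro t ht
      rw [interior_Icc] at ht
      rw [(hderiv t ht).deriv]
      have ht' : t ∈ Set.Icc (0 : ℝ) T := ⟨ht.1.le, ht.2.le⟩
      have h1 := hsign t ht'
      have h2 := hψnn (|x t + x (t - τ t)|) (abs_nonneg _)
      nlinarith
  refine ⟨hanti, fun t ht => ?_⟩
  have h0 : (0 : ℝ) ∈ Set.Icc (0 : ℝ) T := ⟨le_rfl, hT.le⟩
  have := hanti h0 ht ht.1
  have h1 : |x t| ^ 2 ≤ |x 0| ^ 2 := by rw [sq_abs, sq_abs]; exact this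
  nlinarith [abs_nonneg (x t), abs_nonneg (x 0)]
end

section
/- Let x₁, …, x_N : [0,∞) → ℝ be solutions of an ODE system with the uniqueness-of-solutions property that whenever x_i(T) = x_j(T) for some T ≥ 0 and i ≠ j, then x_i(t) = x_j(t) for all t ≥ T. If x₁(0) ≤ x₂(0) ≤ … ≤ x_N(0), then x₁(t) ≤ x₂(t) ≤ … ≤ x_N(t) for all t ≥ 0. -/
/-- Order preservation for 1D trajectories that coalesce upon collision:
if trajectories are continuous, stick together after any collision, and are
initially ordered, then the ordering is preserved for all t ≥ 0. -/
theorem stmt_9 (N : ℕ) (x : Fin N → ℝ → ℝ)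
    (hcont : ∀ i : Fin N, ContinuousOn (x i) (Set.Ici 0))
    (hstick : ∀ (i j : Fin N) (T : ℝ), i ≠ j → 0 ≤ T → x i T = x j T →
      ∀ t : ℝ, T ≤ t → x i t = x j t)
    (hinit : ∀ i j : Fin N, i ≤ j → x i 0 ≤ x j 0) :
    ∀ t : ℝ, 0 ≤ t → ∀ i j : Fin N, i ≤ j → x i t ≤ x j t := by
  intro t ht i j hij
  by_contra h
  push_neg at h
  have hij' : i ≠ j := by rintro rfl; exact absurd le_rfl (not_le.mpr h)
  set f : ℝ → ℝ := fun s => x j s - x i s with hf_def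
  have hf : ContinuousOn f (Set.Icc 0 t) :=
    (((hcont j).sub (hcont i)).mono Set.Icc_subset_Ici_self)
  have h0 : 0 ≤ f 0 := sub_nonneg.mpr (hinit i j hij)
  have ht' : f t < 0 := sub_neg.mpr h
  have hmem : (0:ℝ) ∈ Set.Icc (f t) (f 0) := ⟨ht'.le, h0⟩
  obtain ⟨s, hs, hfs⟩ := intermediate_value_Icc' ht hf hmem
  have heq := hstick i j s hij' hs.1 (sub_eq_zero.mp hfs).symm t hs.2
  simp only [hf_def] at ht'
  linarith
end

section
/- Let c > s > 0 and N ≥ 2. Suppose x₁, …, x_N : (-∞, ∞) → ℝ are uniformly Lipschitz with constant s, ordered so that x₁(t) ≤ x_j(t) ≤ x_N(t) for all j and all t ≥ 0, and satisfy ẋ₁(t) = (1/(N-1))·Σ_{j=1}^N ψ(|x̃_j(t) - x₁(t)|)·(x̃_j(t) - x₁(t)) where x̃_j(t) = x_j(t - τ_{1j}(t)) and τ_{1j}(t) ≥ 0 solves c·τ_{1j}(t) = |x₁(t) - x_j(t - τ_{1j}(t))|, with ψ ≥ 0. Then ẋ₁(t) ≥ 0 for all t ≥ 0. Symmetrically,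 ẋ_N(t) ≤ 0 for all t ≥ 0. -/
/-- In the 1D Hegselmann-Krause model with finite propagation speed c > s, the
leftmost agent moves right and the rightmost agent moves left: ẋ₁ ≥ 0, ẋ_N ≤ 0. -/
theorem stmt_10 (c s : ℝ) (hs : 0 < s) (hsc : s < c) (N : ℕ) (hN : 2 ≤ N)
    (ψ : ℝ → ℝ) (hψnn : ∀ r : ℝ, 0 ≤ ψ r)
    (x : Fin N → ℝ → ℝ) (τ : Fin N → Fin N → ℝ → ℝ)
    (hlip : ∀ (i : Fin N) (a b : ℝ), |x i a - x i b| ≤ s * |a - b|)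
    (hτ0 : ∀ (i j : Fin N) (t : ℝ), 0 ≤ τ i j t)
    (hτ : ∀ (i j : Fin N) (t : ℝ), c * τ i j t = |x i t - x j (t - τ i j t)|)
    (hode : ∀ (i : Fin N) (t : ℝ), 0 ≤ t →
      HasDerivAt (x i)
        (((N : ℝ) - 1)⁻¹ * ∑ j : Fin N,
          ψ (|x j (t - τ i j t) - x i t|) * (x j (t - τ i j t) - x i t)) t)
    (horder : ∀ (j : Fin N) (t : ℝ), 0 ≤ t →
      x ⟨0, by omega⟩ t ≤ x j t ∧ x j t ≤ x ⟨N - 1, by omega⟩ t) :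
    ∀ t : ℝ, 0 ≤ t →
      0 ≤ deriv (x ⟨0, by omega⟩) t ∧ deriv (x ⟨N - 1, by omega⟩) t ≤ 0 := by
  intro t ht
  set i0 : Fin N := ⟨0, by omega⟩
  set iN : Fin N := ⟨N - 1, by omega⟩
  have hNinv : (0:ℝ) ≤ ((N : ℝ) - 1)⁻¹ := by
    have h2 : (2:ℝ) ≤ (N:ℝ) := by exact_mod_cast hN
    exact inv_nonneg.mpr (by linarith)
  -- key lemma for leftmost agent
  have key0 : ∀ j : Fin N, 0 ≤ x j (t - τ i0 j t) - x i0 t := by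
    intro j
    by_contra h
    push_neg at h
    have hlt : x j (t - τ i0 j t) < x i0 t := by linarith
    set T := τ i0 j t with hT
    have hTnn := hτ0 i0 j t
    have habs : c * T = x i0 t - x j (t - T) := by
      rw [hτ i0 j t, abs_of_pos (by linarith)]
    have hl := hlip j t (t - T)
    rw [abs_le] at hl
    have habs2 : |t - (t - T)| = T := by rw [abs_of_nonneg (by linarith)]; ring
    rw [habs2] at hl
    have hord := (horder j t ht).1
    have hTz : T = 0 := by nlinarith
    rw [hTz] at hlt
    simp at hlt
    linarith
  have keyN : ∀ j : Fin N, x j (t - τ iN j t) - x iN t ≤ 0 := by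
    intro j
    by_contra h
    push_neg at h
    have hlt : x iN t < x j (t - τ iN j t) := by linarith
    set T := τ iN j t with hT
    have hTnn := hτ0 iN j t
    have habs : c * T = x j (t - T) - x iN t := by
      rw [hτ iN j t, abs_of_neg (by linarith)]; ring
    have hl := hlip j t (t - T)
    rw [abs_le] at hl
    have habs2 : |t - (t - T)| = T := by rw [abs_of_nonneg (by linarith)]; ring
    rw [habs2] at hl
    have hord := (horder j t ht).2
    have hTz : T = 0 := by nlinarith
    rw [hTz] at hlt
    simp at hlt
    linarith
  constructor
  · rw [(hode i0 t ht).deriv]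
    apply mul_nonneg hNinv
    apply Finset.sum_nonneg
    intro j _
    exact mul_nonneg (hψnn _) (key0 j)
  · rw [(hode iN t ht).deriv]
    apply mul_nonpos_of_nonneg_of_nonpos hNinv
    apply Finset.sum_nonpos
    intro j _
    exact mul_nonpos_of_nonneg_of_nonpos (hψnn _) (keyN j)
end

section
/- Let c > s > 0, N ≥ 2, and let ψ : [0,∞) → [0,∞). Let x₁,…,x_N : ℝ → ℝ^d be uniformly Lipschitz with constant s, solving on (0,∞) the system ẋ_i(t) = (1/(N-1))·Σ_j ψ(|x̃_j^{(i)}(t) - x_i(t)|)·(x̃_j^{(i)}(t) - x_i(t)), where x̃_j^{(i)}(t) = x_j(t - τ_{ij}(t)) and c·τ_{ij}(t) = |x_i(t) - x_j(t - τ_{ij}(t))|. Suppose ψ̲ ≤ ψ(r) ≤ ψ̄ for all r in a range containing all arguments arising along the solution, with 0 < ψ̲ ≤ ψ̄. If at time t the diameter d_x(t) = max_{j,l}|x_j(t) - x_l(t)| is attained by the pair (i,k) and d_x is differentiable at t, then d/dt d_x(t) ≤ [2s·ψ̄/(c - s) - N·ψ̲/(N - 1)]·d_x(t). -/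
open RealInnerProductSpace

set_option maxHeartbeats 1000000 in
/-- Diameter contraction estimate for the multidimensional Hegselmann-Krause model
with finite speed of information propagation: if the diameter d_x is attained at
time t > 0 by the pair (i,k) and is differentiable at t, then
d/dt d_x(t) ≤ [2s·ψ̄/(c-s) - N·ψ̲/(N-1)]·d_x(t). -/
theorem stmt_16 (dim : ℕ) (c s : ℝ) (hs : 0 < s) (hsc : s < c)
    (N : ℕ) (hN : 2 ≤ N)
    (ψ : ℝ → ℝ) (ψlo ψhi : ℝ) (hψlo : 0 < ψlo) (hψlohi : ψlo ≤ ψhi)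
    (hψbounds : ∀ r : ℝ, 0 ≤ r → ψlo ≤ ψ r ∧ ψ r ≤ ψhi)
    (x : Fin N → ℝ → EuclideanSpace ℝ (Fin dim))
    (τ : Fin N → Fin N → ℝ → ℝ)
    (hlip : ∀ (i : Fin N) (a b : ℝ), ‖x i a - x i b‖ ≤ s * |a - b|)
    (hτ0 : ∀ (i j : Fin N) (u : ℝ), 0 ≤ τ i j u)
    (hτ : ∀ (i j : Fin N) (u : ℝ), c * τ i j u = ‖x i u - x j (u - τ i j u)‖)
    (hode : ∀ (i : Fin N) (u : ℝ), 0 < u →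
      HasDerivAt (x i)
        (((N : ℝ) - 1)⁻¹ • ∑ j : Fin N,
          ψ (‖x j (u - τ i j u) - x i u‖) • (x j (u - τ i j u) - x i u)) u)
    (dx : ℝ → ℝ)
    (hdx : ∀ u : ℝ, dx u = ⨆ p : Fin N × Fin N, ‖x p.1 u - x p.2 u‖)
    (t : ℝ) (ht : 0 < t) (i k : Fin N)
    (hattain : dx t = ‖x i t - x k t‖)
    (D : ℝ) (hD : HasDerivAt dx D t) :
    D ≤ (2 * s * ψhi / (c - s) - (N : ℝ) * ψlo / ((N : ℝ) - 1)) * dx t := by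
  have hN2 : (2:ℝ) ≤ (N:ℝ) := by exact_mod_cast hN
  have hN1 : (0:ℝ) < (N:ℝ) - 1 := by linarith
  have hcs : 0 < c - s := by linarith
  have hle : ∀ (j l : Fin N) (u : ℝ), ‖x j u - x l u‖ ≤ dx u := by
    intro j l u
    rw [hdx]
    exact le_ciSup (f := fun p : Fin N × Fin N => ‖x p.1 u - x p.2 u‖)
      (Set.Finite.bddAbove (Set.finite_range _)) (j, l)
  have hdx0 : ∀ u, 0 ≤ dx u := by
    intro u
    have h := hle i i u
    simpa using h
  by_cases hzero : dx t = 0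
  · have hmin : IsLocalMin dx t :=
      Filter.Eventually.of_forall (fun u => by rw [hzero]; exact hdx0 u)
    have hD0 : D = 0 := hmin.hasDerivAt_eq_zero hD
    rw [hD0, hzero, mul_zero]
  · have hdxt : 0 < dx t := lt_of_le_of_ne (hdx0 t) (Ne.symm hzero)
    -- Key per-agent estimate
    have key : ∀ a b : Fin N, ‖x a t - x b t‖ = dx t →
        (∑ j : Fin N, ψ (‖x j (t - τ a j t) - x a t‖) *
            ⟪x j (t - τ a j t) - x a t, x a t - x b t⟫) ≤
        ((N:ℝ) - 1) * (s * ψhi / (c - s) * (dx t)^2) +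
          ψlo * ∑ j : Fin N, ⟪x j t - x a t, x a t - x b t⟫ := by
      intro a b hab
      have hterm : ∀ j : Fin N,
          ψ (‖x j (t - τ a j t) - x a t‖) *
            ⟪x j (t - τ a j t) - x a t, x a t - x b t⟫ ≤
          (if j = a then 0 else s * ψhi / (c - s) * (dx t)^2) +
            ψlo * ⟪x j t - x a t, x a t - x b t⟫ := by
        intro j
        set τ0 := τ a j t with hτ0def
        set y := x j (t - τ0) with hydef
        have hψy1 := (hψbounds (‖y - x a t‖) (norm_nonneg _)).1
        have hψy2 := (hψbounds (‖y - x a t‖) (norm_nonneg _)).2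
        have hψ0 : 0 ≤ ψ (‖y - x a t‖) := le_trans hψlo.le hψy1
        -- geometric fact
        have hgeo : ⟪x j t - x a t, x a t - x b t⟫ ≤ 0 := by
          have hsplit : x j t - x a t = (x j t - x b t) - (x a t - x b t) := by abel
          rw [hsplit, inner_sub_left]
          have h1 : ⟪x j t - x b t, x a t - x b t⟫ ≤ dx t * dx t := by
            calc ⟪x j t - x b t, x a t - x b t⟫ ≤ ‖x j t - x b t‖ * ‖x a t - x b t‖ :=
              real_inner_le_norm _ _
            _ ≤ dx t * dx t := by
              rw [hab]
              exact mul_le_mul_of_nonneg_right (hle j b t) (hdx0 t)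
          have h2 : ⟪x a t - x b t, x a t - x b t⟫ = dx t * dx t := by
            rw [real_inner_self_eq_norm_mul_norm, hab]
          linarith
        -- delay estimate
        have hlipy : ‖y - x j t‖ ≤ s * τ0 := by
          have h := hlip j (t - τ0) t
          have habs : |t - τ0 - t| = τ0 := by
            rw [abs_of_nonpos (by linarith [hτ0 a j t] : t - τ0 - t ≤ 0)]
            ring
          rw [habs] at h
          exact h
        have hcτ : c * τ0 = ‖x a t - y‖ := hτ a j t
        have htri : ‖x a t - y‖ ≤ dx t + s * τ0 := by
          have h1 : x a t - y = (x a t - x j t) + (x j t - y) := by abel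
          calc ‖x a t - y‖ ≤ ‖x a t - x j t‖ + ‖x j t - y‖ := by
                rw [h1]; exact norm_add_le _ _
          _ ≤ dx t + s * τ0 := by
            have := hle a j t
            have h2 : ‖x j t - y‖ = ‖y - x j t‖ := norm_sub_rev _ _
            linarith
        have hτb : (c - s) * τ0 ≤ dx t := by nlinarith
        have hyb : ‖y - x j t‖ ≤ s * dx t / (c - s) := by
          have hτb2 : τ0 ≤ dx t / (c - s) := by
            rw [le_div_iff₀ hcs]; linarith [hτb]
          calc ‖y - x j t‖ ≤ s * τ0 := hlipy
          _ ≤ s * (dx t / (c - s)) := mul_le_mul_of_nonneg_left hτb2 hs.le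
          _ = s * dx t / (c - s) := by ring
        -- split the inner product
        have hsplit2 : ⟪y - x a t, x a t - x b t⟫ =
            ⟪y - x j t, x a t - x b t⟫ + ⟪x j t - x a t, x a t - x b t⟫ := by
          rw [← inner_add_left]
          congr 1
          abel
        rw [hsplit2, mul_add]
        have hterm2 : ψ (‖y - x a t‖) * ⟪x j t - x a t, x a t - x b t⟫ ≤
            ψlo * ⟪x j t - x a t, x a t - x b t⟫ :=
          mul_le_mul_of_nonpos_right hψy1 hgeo
        have hterm1 : ψ (‖y - x a t‖) * ⟪y - x j t, x a t - x b t⟫ ≤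
            (if j = a then 0 else s * ψhi / (c - s) * (dx t)^2) := by
          by_cases hja : j = a
          · subst hja
            have hτ00 : τ0 = 0 := by
              have h2 : ‖x j t - y‖ = ‖y - x j t‖ := norm_sub_rev _ _
              have hcs2 : c * τ0 ≤ s * τ0 := by
                calc c * τ0 = ‖x j t - y‖ := hcτ
                _ = ‖y - x j t‖ := h2
                _ ≤ s * τ0 := hlipy
              nlinarith [hτ0 j j t, hτ0def]
            have hy0 : y - x j t = 0 := by
              rw [hydef, hτ00, sub_zero, sub_self]
            rw [if_pos rfl, hy0, inner_zero_left, mul_zero]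
          · rw [if_neg hja]
            have hip : ⟪y - x j t, x a t - x b t⟫ ≤ s * dx t / (c - s) * dx t := by
              calc ⟪y - x j t, x a t - x b t⟫ ≤ ‖y - x j t‖ * ‖x a t - x b t‖ :=
                real_inner_le_norm _ _
              _ ≤ s * dx t / (c - s) * dx t := by
                rw [hab]
                exact mul_le_mul_of_nonneg_right hyb (hdx0 t)
            have hb0 : 0 ≤ s * dx t / (c - s) * dx t := by positivity
            calc ψ (‖y - x a t‖) * ⟪y - x j t, x a t - x b t⟫ ≤
                ψ (‖y - x a t‖) * (s * dx t / (c - s) * dx t) :=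
                  mul_le_mul_of_nonneg_left hip hψ0
            _ ≤ ψhi * (s * dx t / (c - s) * dx t) :=
                  mul_le_mul_of_nonneg_right hψy2 hb0
            _ = s * ψhi / (c - s) * (dx t)^2 := by ring
        linarith
      calc (∑ j : Fin N, ψ (‖x j (t - τ a j t) - x a t‖) *
              ⟪x j (t - τ a j t) - x a t, x a t - x b t⟫) ≤
          ∑ j : Fin N, ((if j = a then 0 else s * ψhi / (c - s) * (dx t)^2) +
            ψlo * ⟪x j t - x a t, x a t - x b t⟫) := Finset.sum_le_sum (fun j _ => hterm j)
      _ = ((N:ℝ) - 1) * (s * ψhi / (c - s) * (dx t)^2) +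
            ψlo * ∑ j : Fin N, ⟪x j t - x a t, x a t - x b t⟫ := by
        rw [Finset.sum_add_distrib, ← Finset.mul_sum]
        congr 1
        have h1 : ∀ j : Fin N, (if j = a then (0:ℝ) else s * ψhi / (c - s) * (dx t)^2)
            = s * ψhi / (c - s) * (dx t)^2 -
              (if j = a then s * ψhi / (c - s) * (dx t)^2 else 0) := by
          intro j; by_cases h : j = a <;> simp [h]
        simp_rw [h1]
        rw [Finset.sum_sub_distrib, Finset.sum_const, Finset.sum_ite_eq' Finset.univ a
          (fun _ => s * ψhi / (c - s) * (dx t)^2), if_pos (Finset.mem_univ a)]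
        simp [Finset.card_univ]
        ring
    -- derivative identity: dx t * D = ⟪w, vi - vk⟫
    set vi := (((N : ℝ) - 1)⁻¹ • ∑ j : Fin N,
      ψ (‖x j (t - τ i j t) - x i t‖) • (x j (t - τ i j t) - x i t) :
        EuclideanSpace ℝ (Fin dim)) with hvi
    set vk := (((N : ℝ) - 1)⁻¹ • ∑ j : Fin N,
      ψ (‖x j (t - τ k j t) - x k t‖) • (x j (t - τ k j t) - x k t) :
        EuclideanSpace ℝ (Fin dim)) with hvk
    have hw : HasDerivAt (fun u => x i u - x k u) (vi - vk) t :=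
      (hode i t ht).sub (hode k t ht)
    have hInner : HasDerivAt (fun u => ⟪x i u - x k u, x i u - x k u⟫)
        (⟪x i t - x k t, vi - vk⟫ + ⟪vi - vk, x i t - x k t⟫) t :=
      HasDerivAt.inner ℝ hw hw
    have hφ : HasDerivAt (fun u => (dx u)^2 - ⟪x i u - x k u, x i u - x k u⟫)
        ((2:ℕ) * dx t ^ 1 * D - (⟪x i t - x k t, vi - vk⟫ + ⟪vi - vk, x i t - x k t⟫)) t :=
      (hD.pow 2).sub hInner
    have hmin : IsLocalMin (fun u => (dx u)^2 - ⟪x i u - x k u, x i u - x k u⟫) t := by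
      apply Filter.Eventually.of_forall
      intro u
      simp only
      have h1 : ⟪x i u - x k u, x i u - x k u⟫ = ‖x i u - x k u‖^2 :=
        real_inner_self_eq_norm_sq _
      have h2 : ⟪x i t - x k t, x i t - x k t⟫ = ‖x i t - x k t‖^2 :=
        real_inner_self_eq_norm_sq _
      rw [h1, h2, ← hattain]
      have h3 : ‖x i u - x k u‖^2 ≤ (dx u)^2 :=
        pow_le_pow_left₀ (norm_nonneg _) (hle i k u) 2
      nlinarith
    have hder0 : (2:ℕ) * dx t ^ 1 * D -
        (⟪x i t - x k t, vi - vk⟫ + ⟪vi - vk, x i t - x k t⟫) = 0 :=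
      hmin.hasDerivAt_eq_zero hφ
    have hkey0 : dx t * D = ⟪x i t - x k t, vi - vk⟫ := by
      have hc : ⟪vi - vk, x i t - x k t⟫ = ⟪x i t - x k t, vi - vk⟫ :=
        real_inner_comm (x i t - x k t) (vi - vk)
      rw [hc] at hder0
      simp only [Nat.cast_ofNat, pow_one] at hder0
      linarith
    -- expand the inner product
    have hexp : ⟪x i t - x k t, vi - vk⟫ = ((N:ℝ) - 1)⁻¹ *
        ((∑ j : Fin N, ψ (‖x j (t - τ i j t) - x i t‖) *
            ⟪x j (t - τ i j t) - x i t, x i t - x k t⟫) +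
         (∑ j : Fin N, ψ (‖x j (t - τ k j t) - x k t‖) *
            ⟪x j (t - τ k j t) - x k t, x k t - x i t⟫)) := by
      have e1 : ⟪x i t - x k t, vi⟫ = ((N:ℝ) - 1)⁻¹ *
          ∑ j : Fin N, ψ (‖x j (t - τ i j t) - x i t‖) *
            ⟪x j (t - τ i j t) - x i t, x i t - x k t⟫ := by
        rw [hvi, real_inner_smul_right, inner_sum]
        congr 1
        refine Finset.sum_congr rfl (fun j _ => ?_)
        rw [real_inner_smul_right, real_inner_comm]
      have e2 : ⟪x i t - x k t, vk⟫ = -(((N:ℝ) - 1)⁻¹ *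
          ∑ j : Fin N, ψ (‖x j (t - τ k j t) - x k t‖) *
            ⟪x j (t - τ k j t) - x k t, x k t - x i t⟫) := by
        rw [hvk, real_inner_smul_right, inner_sum, ← mul_neg, ← Finset.sum_neg_distrib]
        congr 1
        refine Finset.sum_congr rfl (fun j _ => ?_)
        rw [real_inner_smul_right, real_inner_comm, ← neg_mul,
          show x k t - x i t = -(x i t - x k t) from by abel, inner_neg_right]
        ring
      rw [inner_sub_right, e1, e2]
      ring
    -- combine
    have hik : ‖x i t - x k t‖ = dx t := hattain.symm
    have hki : ‖x k t - x i t‖ = dx t := by rw [norm_sub_rev]; exact hattain.symm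
    have k1 := key i k hik
    have k2 := key k i hki
    have hsum : (∑ j : Fin N, ⟪x j t - x i t, x i t - x k t⟫) +
        (∑ j : Fin N, ⟪x j t - x k t, x k t - x i t⟫) = -((N:ℝ) * (dx t)^2) := by
      rw [← Finset.sum_add_distrib]
      have hj : ∀ j : Fin N,
          ⟪x j t - x i t, x i t - x k t⟫ + ⟪x j t - x k t, x k t - x i t⟫
          = -((dx t)^2) := by
        intro j
        have h2 : ⟪x j t - x k t, x k t - x i t⟫
            = ⟪x k t - x j t, x i t - x k t⟫ := by
          rw [show x k t - x i t = -(x i t - x k t) from by abel, inner_neg_right,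
            show x k t - x j t = -(x j t - x k t) from by abel, inner_neg_left]
        rw [h2, ← inner_add_left,
          show (x j t - x i t) + (x k t - x j t) = -(x i t - x k t) from by abel,
          inner_neg_left, real_inner_self_eq_norm_sq, hik]
      rw [Finset.sum_congr rfl (fun j _ => hj j), Finset.sum_const, Finset.card_univ,
        Fintype.card_fin, nsmul_eq_mul]
      ring
    have hψsum : ψlo * (∑ j : Fin N, ⟪x j t - x i t, x i t - x k t⟫) +
        ψlo * (∑ j : Fin N, ⟪x j t - x k t, x k t - x i t⟫)
        = -((N:ℝ) * ψlo * (dx t)^2) := by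
      rw [← mul_add, hsum]; ring
    have hbound : dx t * D ≤
        dx t * ((2 * s * ψhi / (c - s) - (N : ℝ) * ψlo / ((N : ℝ) - 1)) * dx t) := by
      rw [hkey0, hexp]
      have hsum2 : (∑ j : Fin N, ψ (‖x j (t - τ i j t) - x i t‖) *
            ⟪x j (t - τ i j t) - x i t, x i t - x k t⟫) +
          (∑ j : Fin N, ψ (‖x j (t - τ k j t) - x k t‖) *
            ⟪x j (t - τ k j t) - x k t, x k t - x i t⟫) ≤
          2 * ((N:ℝ) - 1) * (s * ψhi / (c - s) * (dx t)^2) -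
            (N:ℝ) * ψlo * (dx t)^2 := by
        linarith [k1, k2, hψsum]
      calc ((N:ℝ) - 1)⁻¹ * _ ≤ ((N:ℝ) - 1)⁻¹ *
          (2 * ((N:ℝ) - 1) * (s * ψhi / (c - s) * (dx t)^2) -
            (N:ℝ) * ψlo * (dx t)^2) :=
        mul_le_mul_of_nonneg_left hsum2 (inv_nonneg.mpr hN1.le)
      _ = dx t * ((2 * s * ψhi / (c - s) - (N : ℝ) * ψlo / ((N : ℝ) - 1)) * dx t) := by
        field_simp
    exact le_of_mul_le_mul_left hbound hdxt
end

section
/- Let c > s > 0 and suppose trajectories x_j : (-∞, t] → ℝ^d are uniformly Lipschitz with constant s for j = 1, …, N, and satisfy |x_j(σ)| ≤ R for all σ ≤ t and all j. Fix i and let τ_{ij} ≥ 0 solve c·τ_{ij} = |x_i(t) - x_j(t - τ_{ij})|. If |x_i(t)| = R and x_j(t - τ_{ij})·x_i(t) = |x_i(t)|² for all j ∈ {1,…,N}, then τ_{ij} = 0 and x_j(t) = x_i(t) for all j. -/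
/-- Rigidity in the proof that the group radius is non-increasing: if all
trajectories stay in the ball of radius R up to time t, |x_i(t)| = R, and every
delayed position satisfies x_j(t-τ_{ij})·x_i(t) = |x_i(t)|², then all delays
vanish and all agents coincide with x_i at time t. -/
theorem stmt_18 (d : ℕ) (c s t R : ℝ) (hs : 0 < s) (hsc : s < c)
    (N : ℕ) (x : Fin N → ℝ → EuclideanSpace ℝ (Fin d))
    (hlip : ∀ (j : Fin N) (a b : ℝ), a ≤ t → b ≤ t → ‖x j a - x j b‖ ≤ s * |a - b|)
    (hR : ∀ (j : Fin N) (σ : ℝ), σ ≤ t → ‖x j σ‖ ≤ R)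
    (i : Fin N) (τ : Fin N → ℝ)
    (hτ0 : ∀ j : Fin N, 0 ≤ τ j)
    (hτ : ∀ j : Fin N, c * τ j = ‖x i t - x j (t - τ j)‖)
    (hnorm : ‖x i t‖ = R)
    (hinner : ∀ j : Fin N, (inner ℝ (x j (t - τ j)) (x i t) : ℝ) = ‖x i t‖ ^ 2) :
    ∀ j : Fin N, τ j = 0 ∧ x j t = x i t := by
  intro j
  set y := x j (t - τ j) with hy
  have hyt : t - τ j ≤ t := by linarith [hτ0 j]
  have hyR : ‖y‖ ≤ R := hR j _ hyt
  have hsq : ‖x i t - y‖ ^ 2 ≤ 0 := by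
    have h := norm_sub_sq_real (x i t) y
    have hi : (inner ℝ (x i t) y : ℝ) = ‖x i t‖ ^ 2 := by
      rw [real_inner_comm]; exact hinner j
    have : ‖y‖ ^ 2 ≤ R ^ 2 := by
      have h0 : (0:ℝ) ≤ ‖y‖ := norm_nonneg _
      nlinarith
    have hn2 : ‖x i t‖ ^ 2 = R ^ 2 := by rw [hnorm]
    nlinarith [norm_nonneg (x i t - y)]
  have hzero : ‖x i t - y‖ = 0 := le_antisymm (by nlinarith [norm_nonneg (x i t - y)]) (norm_nonneg _)
  have heq : y = x i t := by
    have := norm_sub_eq_zero_iff.mp hzero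
    exact this.symm
  have hτj : τ j = 0 := by
    have h := hτ j
    rw [hzero] at h
    have hc : 0 < c := lt_trans hs hsc
    exact (mul_eq_zero.mp h).resolve_left (ne_of_gt hc)
  refine ⟨hτj, ?_⟩
  have : x j t = y := by rw [hy, hτj, sub_zero]
  rw [this, heq]
end
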